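/- Suppose the k-th submodule M_k of cont(L) contains a desingularized operator for L. If s is a nonzero element of minimal x-degree in the k-th coefficient ideal I_k, then any operator S ∈ M_k with lc_∂(S) = s and deg_∂(S) = k is a desingularized operator for L. -/

import Mathlib

open Polynomial

noncomputable section

/-- `Q_R(x)`, the field of rational functions over the fraction field `Q_R` of `R`,
realized as the fraction field of `R[x]`. -/
abbrev QX (R : Type) [CommRing R] [IsDomain R] := FractionRing (Polynomial R)

/-- Data of an Ore algebra `R[x][∂; σ, δ] ⊆ Q_R(x)[∂; σ, δ]`.
The ring `A` plays the role of `Q_R(x)[∂]`; `ι` embeds the coefficient field,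
`D` is the Ore variable `∂`, subject to the commutation rule `∂·p = σ(p)·∂ + δ(p)`,
and every element of `A` has a unique finite coefficient expansion `Σ ι(cᵢ)·∂^i`. -/
structure OreAlg (R : Type) [CommRing R] [IsDomain R] (A : Type) [Ring A] where
  σ : Polynomial R ≃+* Polynomial R
  σ_fix : ∀ r : R, σ (C r) = C r
  δ : Polynomial R → Polynomial R
  δ_add : ∀ f g, δ (f + g) = δ f + δ g
  δ_linear : ∀ (r : R) (f), δ (C r * f) = C r * δ f
  ι : QX R →+* A
  ι_inj : Function.Injective ι
  D : A
  comm_rule : ∀ p : Polynomial R,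
    D * ι (algebraMap (Polynomial R) (QX R) p)
      = ι (algebraMap (Polynomial R) (QX R) (σ p)) * D
        + ι (algebraMap (Polynomial R) (QX R) (δ p))
  δ_leibniz : ∀ f g, δ (f * g) = σ f * δ g + δ f * g
  coeff : A → ℕ → QX R
  coeff_inj : ∀ P Q : A, (∀ i, coeff P i = coeff Q i) → P = Q
  coeff_add : ∀ P Q i, coeff (P + Q) i = coeff P i + coeff Q i
  coeff_smul : ∀ (f : QX R) (P : A) (i), coeff (ι f * P) i = f * coeff P i
  coeff_bdd : ∀ P : A, ∃ N, ∀ i, N < i → coeff P i = 0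
  coeff_mk : ∀ (N : ℕ) (c : ℕ → QX R), (∀ i, N < i → c i = 0) →
    ∀ j, coeff (∑ i ∈ Finset.range (N + 1), ι (c i) * D ^ i) j = c j

namespace OreAlg

variable {R : Type} [CommRing R] [IsDomain R] {A : Type} [Ring A] (O : OreAlg R A)

/-- The embedding of `R[x]` into the Ore algebra. -/
def ιp (f : Polynomial R) : A := O.ι (algebraMap (Polynomial R) (QX R) f)

/-- The `i`-th `∂`-coefficient of `P` lies in `R[x]`. -/
def PolyCoeff (P : A) (i : ℕ) : Prop :=
  ∃ f : Polynomial R, O.coeff P i = algebraMap (Polynomial R) (QX R) f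

/-- `P` belongs to the subring `R[x][∂]` of `Q_R(x)[∂]`. -/
def InB (P : A) : Prop := ∀ i, O.PolyCoeff P i

/-- The order (degree in `∂`) of an operator. -/
def ord (P : A) : ℕ := sSup {i | O.coeff P i ≠ 0}

/-- The leading coefficient (with respect to `∂`), in `Q_R(x)`. -/
def lc (P : A) : QX R := O.coeff P (O.ord P)

/-- The contraction ideal `cont(L) = Q_R(x)[∂]·L ∩ R[x][∂]`. -/
def cont (L : A) : Set A := {P | O.InB P ∧ ∃ Q : A, P = Q * L}

/-- The `k`-th submodule `M_k(L) = {P ∈ cont(L) : deg_∂ P ≤ k}`. -/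
def M (L : A) (k : ℕ) : Set A := {P | P ∈ O.cont L ∧ O.ord P ≤ k}

/-- The `k`-th coefficient ideal `I_k = {[∂^k]P : P ∈ M_k} ∪ {0}` (as a set of
polynomials; `0` arises from `P = 0`). -/
def Icoeff (L : A) (k : ℕ) : Set (Polynomial R) :=
  {f | ∃ P ∈ O.M L k, O.coeff P k = algebraMap (Polynomial R) (QX R) f}

end OreAlg

/-- `gcd(p, w) = 1` in `R[x]`: every common divisor is a unit. -/
def Copr {R : Type} [CommRing R] (p w : Polynomial R) : Prop :=
  ∀ d : Polynomial R, d ∣ p → d ∣ w → IsUnit d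

namespace OreAlg

variable {R : Type} [CommRing R] [IsDomain R] {A : Type} [Ring A] (O : OreAlg R A)

/-- `P` is a `p`-removing operator for `L` over `R[x]`, of order `k`:
`P·L ∈ R[x][∂]` and `σ^{-k}(lc_∂(P·L)) = (w/(v·p))·lc_∂(L)` with `gcd(p, w) = 1`. -/
def IsRemoving (L : A) (p : Polynomial R) (k : ℕ) (P : A) : Prop :=
  O.ord P = k ∧ O.InB (P * L) ∧
  ∃ w v t l : Polynomial R, v ≠ 0 ∧ Copr p w ∧
    O.lc (P * L) = algebraMap (Polynomial R) (QX R) t ∧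
    O.lc L = algebraMap (Polynomial R) (QX R) l ∧
    (⇑O.σ.symm)^[k] t * (v * p) = w * l

/-- `p` is removable from `L` (at some order). -/
def Removable (L : A) (p : Polynomial R) : Prop :=
  ∃ k P, O.IsRemoving L p k P

/-- Factorization data for `lc_∂(L) = c·p₁^{e₁}⋯p_m^{e_m}`, with `c ∈ R` and the
`pᵢ ∈ R[x] \ R` irreducible and pairwise coprime; `L` has order `r > 0`. -/
def Factored (L : A) (r m : ℕ) (c : R) (p : Fin m → Polynomial R)
    (e : Fin m → ℕ) : Prop :=
  O.ord L = r ∧ 0 < r ∧ c ≠ 0 ∧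
  O.lc L = algebraMap (Polynomial R) (QX R) (C c * ∏ i, p i ^ e i) ∧
  (∀ i, Irreducible (p i) ∧ 0 < (p i).natDegree) ∧
  (∀ i j, i ≠ j → Copr (p i) (p j))

/-- `T` is a desingularized operator for `L`: `T ∈ cont(L)` and
`σ^{r-k}(lc_∂(T)) = (a/(b·∏ pᵢ^{kᵢ}))·lc_∂(L)` with `a, b ∈ R`, where each
`pᵢ^{dᵢ}` with `dᵢ > kᵢ` is non-removable from `L`. -/
def Desing (L : A) (r m : ℕ) (c : R) (p : Fin m → Polynomial R)
    (e : Fin m → ℕ) (T : A) : Prop :=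
  T ∈ O.cont L ∧ r ≤ O.ord T ∧
  ∃ (a b : R) (k : Fin m → ℕ) (t l : Polynomial R),
    b ≠ 0 ∧ (∀ i, k i ≤ e i) ∧
    O.lc T = algebraMap (Polynomial R) (QX R) t ∧
    O.lc L = algebraMap (Polynomial R) (QX R) l ∧
    (⇑O.σ.symm)^[O.ord T - r] t * (C b * ∏ i, p i ^ k i) = C a * l ∧
    (∀ i (d : ℕ), k i < d → ¬ O.Removable L (p i ^ d))

/-- The left ideal of `R[x][∂]` generated by a set `S ⊆ R[x][∂]`. -/
def LIdeal (S : Set A) : Set A :=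
  {P | ∃ (n : ℕ) (co s : Fin n → A), (∀ i, O.InB (co i)) ∧ (∀ i, s i ∈ S) ∧
    P = ∑ i, co i * s i}

/-- The constant `a ∈ R` viewed inside the Ore algebra. -/
def cst (a : R) : A := O.ιp (C a)

/-- The saturation `I : a^∞ = {P ∈ R[x][∂] : aⁱ·P ∈ I for some i}`. -/
def sat (I : Set A) (a : R) : Set A :=
  {P | O.InB P ∧ ∃ i : ℕ, O.cst a ^ i * P ∈ I}

end OreAlg

namespace OreAlg

variable {R : Type} [CommRing R] [IsDomain R] {A : Type} [Ring A] (O : OreAlg R A)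

lemma algP_inj (O : OreAlg R A) : Function.Injective (algebraMap (Polynomial R) (QX R)) :=
  IsFractionRing.injective _ _

lemma coeff_zero' (i : ℕ) : O.coeff 0 i = 0 := by
  have h := O.coeff_smul 0 0 i
  rw [map_zero, zero_mul, zero_mul] at h
  exact h

lemma eq_zero_of_coeff {P : A} (h : ∀ i, O.coeff P i = 0) : P = 0 :=
  O.coeff_inj P 0 fun i => by rw [h i, O.coeff_zero']

lemma bddAbove_coeff (P : A) : BddAbove {j | O.coeff P j ≠ 0} := by
  obtain ⟨N, hN⟩ := O.coeff_bdd P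
  exact ⟨N, fun j hj => by by_contra h'; exact hj (hN j (lt_of_not_ge h'))⟩

lemma coeff_of_ord_lt (P : A) {i : ℕ} (h : O.ord P < i) : O.coeff P i = 0 := by
  by_contra hne
  have : i ≤ O.ord P := le_csSup (O.bddAbove_coeff P) hne
  omega

lemma ord_le (P : A) (k : ℕ) (h : ∀ i, k < i → O.coeff P i = 0) : O.ord P ≤ k := by
  rcases Set.eq_empty_or_nonempty {j | O.coeff P j ≠ 0} with he | hne
  · rw [ord, he, csSup_empty]; exact Nat.zero_le _
  · exact csSup_le hne fun b hb => by by_contra h'; exact hb (h b (lt_of_not_ge h'))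

lemma ord_eq_of (P : A) (k : ℕ) (h1 : O.coeff P k ≠ 0)
    (h2 : ∀ i, k < i → O.coeff P i = 0) : O.ord P = k :=
  le_antisymm (O.ord_le P k h2) (le_csSup (O.bddAbove_coeff P) h1)

lemma ord_zero : O.ord (0 : A) = 0 := by
  have : {j | O.coeff (0 : A) j ≠ 0} = ∅ := by
    ext j; simp [O.coeff_zero']
  rw [ord, this, csSup_empty]; rfl

lemma coeff_ord_ne {P : A} (hP : P ≠ 0) : O.coeff P (O.ord P) ≠ 0 := by
  have hne : {j | O.coeff P j ≠ 0}.Nonempty := by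
    by_contra h
    exact hP (O.eq_zero_of_coeff fun i => by
      by_contra h'
      exact h ⟨i, h'⟩)
  exact Nat.sSup_mem hne (O.bddAbove_coeff P)

lemma repr (P : A) (N : ℕ) (h : ∀ i, N < i → O.coeff P i = 0) :
    P = ∑ i ∈ Finset.range (N + 1), O.ι (O.coeff P i) * O.D ^ i :=
  O.coeff_inj P _ fun j => (O.coeff_mk N _ h j).symm

lemma δ_zero : O.δ 0 = 0 := by
  have h := O.δ_add 0 0
  simp only [add_zero] at h
  exact left_eq_add.mp h

end OreAlg
namespace OreAlg

variable {R : Type} [CommRing R] [IsDomain R] {A : Type} [Ring A] (O : OreAlg R A)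

lemma mulD_facts (P : A) (hB : O.InB P) (hP : P ≠ 0) (t : Polynomial R)
    (ht : O.lc P = algebraMap (Polynomial R) (QX R) t) :
    O.InB (O.D * P) ∧ O.D * P ≠ 0 ∧ O.ord (O.D * P) = O.ord P + 1 ∧
    O.lc (O.D * P) = algebraMap (Polynomial R) (QX R) (O.σ t) := by
  classical
  choose g hg using hB
  set n := O.ord P with hn
  have hgz : ∀ i, n < i → g i = 0 := fun i hi => O.algP_inj (by
    rw [← hg i, O.coeff_of_ord_lt P hi, map_zero])
  set gs : ℕ → Polynomial R := fun j => Nat.rec 0 (fun m _ => g m) j with hgs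
  set c' : ℕ → QX R := fun j =>
    algebraMap (Polynomial R) (QX R) (O.σ (gs j) + O.δ (g j)) with hc'
  have hvanish : ∀ j, n + 1 < j → c' j = 0 := by
    intro j hj
    obtain ⟨j', rfl⟩ : ∃ j', j = j' + 1 := ⟨j - 1, by omega⟩
    have h1 : gs (j' + 1) = g j' := rfl
    rw [hc']
    simp only [h1, hgz j' (by omega), hgz (j'+1) (by omega), map_zero, O.δ_zero,
      add_zero, map_zero]
  have key : O.D * P = ∑ j ∈ Finset.range (n + 1 + 1), O.ι (c' j) * O.D ^ j := by
    have hrepr := O.repr P n fun i hi => O.coeff_of_ord_lt P hi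
    have hterm : ∀ i, O.D * (O.ι (O.coeff P i) * O.D ^ i)
        = O.ι (algebraMap (Polynomial R) (QX R) (O.σ (g i))) * O.D ^ (i + 1)
          + O.ι (algebraMap (Polynomial R) (QX R) (O.δ (g i))) * O.D ^ i := by
      intro i
      rw [hg i, ← mul_assoc, O.comm_rule (g i), add_mul, mul_assoc, ← pow_succ']
    have hsplitc : ∀ j, O.ι (c' j) * O.D ^ j
        = O.ι (algebraMap (Polynomial R) (QX R) (O.σ (gs j))) * O.D ^ j
          + O.ι (algebraMap (Polynomial R) (QX R) (O.δ (g j))) * O.D ^ j := by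
      intro j
      rw [hc']
      simp only [map_add, add_mul]
    calc O.D * P = ∑ i ∈ Finset.range (n + 1), O.D * (O.ι (O.coeff P i) * O.D ^ i) := by
          conv_lhs => rw [hrepr]
          rw [Finset.mul_sum]
      _ = ∑ i ∈ Finset.range (n + 1),
            (O.ι (algebraMap (Polynomial R) (QX R) (O.σ (g i))) * O.D ^ (i + 1)
              + O.ι (algebraMap (Polynomial R) (QX R) (O.δ (g i))) * O.D ^ i) := by
          exact Finset.sum_congr rfl fun i _ => hterm i
      _ = (∑ i ∈ Finset.range (n + 1),
            O.ι (algebraMap (Polynomial R) (QX R) (O.σ (g i))) * O.D ^ (i + 1))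
          + ∑ i ∈ Finset.range (n + 1),
            O.ι (algebraMap (Polynomial R) (QX R) (O.δ (g i))) * O.D ^ i :=
          Finset.sum_add_distrib
      _ = ∑ j ∈ Finset.range (n + 1 + 1), O.ι (c' j) * O.D ^ j := by
          rw [Finset.sum_congr rfl fun j _ => hsplitc j, Finset.sum_add_distrib]
          congr 1
          · have h0 : O.ι (algebraMap (Polynomial R) (QX R) (O.σ (gs 0))) * O.D ^ 0 = 0 := by
              show O.ι (algebraMap (Polynomial R) (QX R) (O.σ (0 : Polynomial R))) * O.D ^ 0 = 0
              rw [map_zero, map_zero, map_zero, zero_mul]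
            conv_rhs => rw [Finset.sum_range_succ']
            rw [h0, add_zero]
          · have hlast : O.ι (algebraMap (Polynomial R) (QX R) (O.δ (g (n + 1)))) * O.D ^ (n + 1) = 0 := by
              rw [hgz (n + 1) (by omega), O.δ_zero, map_zero, map_zero, zero_mul]
            conv_rhs => rw [Finset.sum_range_succ]
            rw [hlast, add_zero]
  have hco : ∀ j, O.coeff (O.D * P) j = c' j := by
    intro j
    rw [key]
    exact O.coeff_mk (n + 1) c' hvanish j
  have hgn : g n ≠ 0 := by
    intro h
    have := O.coeff_ord_ne hP
    rw [← hn, hg n, h, map_zero] at this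
    exact this rfl
  have htop : O.coeff (O.D * P) (n + 1) = algebraMap (Polynomial R) (QX R) (O.σ (g n)) := by
    rw [hco (n + 1)]
    show algebraMap (Polynomial R) (QX R) (O.σ (g n) + O.δ (g (n + 1))) = _
    rw [hgz (n + 1) (by omega), O.δ_zero, add_zero]
  have htopne : O.coeff (O.D * P) (n + 1) ≠ 0 := by
    rw [htop]
    intro h
    have h1 : O.σ (g n) = 0 := O.algP_inj (by rw [h, map_zero])
    exact hgn (O.σ.injective (by rw [h1, map_zero]))
  have hordD : O.ord (O.D * P) = n + 1 :=
    O.ord_eq_of _ (n + 1) htopne fun i hi => by rw [hco i, hvanish i hi]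
  have htg : t = g n := O.algP_inj (by rw [← ht, ← hg n]; rfl)
  refine ⟨fun j => ⟨O.σ (gs j) + O.δ (g j), hco j⟩, ?_, hordD, ?_⟩
  · intro h
    rw [h, O.coeff_zero'] at htopne
    exact htopne rfl
  · rw [lc, hordD, htop, htg]
lemma boost (Lop P : A) (j : ℕ) (hc : P ∈ O.cont Lop) (hP : P ≠ 0) (t : Polynomial R)
    (ht : O.lc P = algebraMap (Polynomial R) (QX R) t) :
    O.D ^ j * P ∈ O.cont Lop ∧ O.D ^ j * P ≠ 0 ∧ O.ord (O.D ^ j * P) = O.ord P + j ∧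
    O.lc (O.D ^ j * P) = algebraMap (Polynomial R) (QX R) ((⇑O.σ)^[j] t) := by
  induction j with
  | zero => exact ⟨by simpa using hc, by simpa using hP, by simp, by simpa using ht⟩
  | succ j IH =>
    obtain ⟨⟨hB, Q, hQ⟩, h0, hord, hlc⟩ := IH
    have heq : O.D ^ (j + 1) * P = O.D * (O.D ^ j * P) := by
      rw [pow_succ', mul_assoc]
    obtain ⟨hB', h0', hord', hlc'⟩ := O.mulD_facts (O.D ^ j * P) hB h0 _ hlc
    rw [← heq] at hB' h0' hord' hlc'
    refine ⟨⟨hB', O.D * Q, by rw [heq, hQ, ← mul_assoc]⟩, h0', ?_, ?_⟩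
    · rw [hord', hord]; ring
    · rw [hlc', Function.iterate_succ_apply']

lemma Icoeff_add' {Lop : A} {k : ℕ} {g1 g2 : Polynomial R}
    (h1 : g1 ∈ O.Icoeff Lop k) (h2 : g2 ∈ O.Icoeff Lop k) : g1 + g2 ∈ O.Icoeff Lop k := by
  obtain ⟨P1, ⟨⟨hB1, Q1, hQ1⟩, ho1⟩, hc1⟩ := h1
  obtain ⟨P2, ⟨⟨hB2, Q2, hQ2⟩, ho2⟩, hc2⟩ := h2
  refine ⟨P1 + P2, ⟨⟨?_, Q1 + Q2, by rw [hQ1, hQ2, add_mul]⟩, ?_⟩, ?_⟩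
  · intro i
    obtain ⟨a1, e1⟩ := hB1 i
    obtain ⟨a2, e2⟩ := hB2 i
    exact ⟨a1 + a2, by rw [O.coeff_add, e1, e2, map_add]⟩
  · apply O.ord_le
    intro i hi
    rw [O.coeff_add, O.coeff_of_ord_lt P1 (lt_of_le_of_lt ho1 hi),
      O.coeff_of_ord_lt P2 (lt_of_le_of_lt ho2 hi), add_zero]
  · rw [O.coeff_add, hc1, hc2, map_add]

lemma Icoeff_smul' {Lop : A} {k : ℕ} (f : Polynomial R) {g : Polynomial R}
    (h : g ∈ O.Icoeff Lop k) : f * g ∈ O.Icoeff Lop k := by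
  obtain ⟨P, ⟨⟨hB, Q, hQ⟩, ho⟩, hc⟩ := h
  refine ⟨O.ι (algebraMap (Polynomial R) (QX R) f) * P,
    ⟨⟨?_, O.ι (algebraMap (Polynomial R) (QX R) f) * Q, by rw [hQ, mul_assoc]⟩, ?_⟩, ?_⟩
  · intro i
    obtain ⟨a, ea⟩ := hB i
    exact ⟨f * a, by rw [O.coeff_smul, ea, map_mul]⟩
  · apply O.ord_le
    intro i hi
    rw [O.coeff_smul, O.coeff_of_ord_lt P (lt_of_le_of_lt ho hi), mul_zero]
  · rw [O.coeff_smul, hc, map_mul]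

lemma min_div (Lop : A) (k : ℕ) (s : Polynomial R) (hs : s ∈ O.Icoeff Lop k) (hs0 : s ≠ 0)
    (hmin : ∀ f ∈ O.Icoeff Lop k, f ≠ 0 → s.natDegree ≤ f.natDegree) :
    ∀ (n : ℕ) (g : Polynomial R), g ∈ O.Icoeff Lop k → g.natDegree ≤ n →
      ∃ (r₀ : R) (q : Polynomial R), r₀ ≠ 0 ∧ C r₀ * g = q * s := by
  intro n
  induction n using Nat.strong_induction_on with
  | _ n IH =>
    intro g hg hgn
    by_cases hg0 : g = 0
    · exact ⟨1, 0, one_ne_zero, by simp [hg0]⟩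
    have hds : s.natDegree ≤ g.natDegree := hmin g hg hg0
    set e := g.natDegree - s.natDegree with he
    set g' := C s.leadingCoeff * g - C g.leadingCoeff * (X ^ e * s) with hg'
    have hslc : s.leadingCoeff ≠ 0 := leadingCoeff_ne_zero.mpr hs0
    have hmem : g' ∈ O.Icoeff Lop k := by
      have : g' = C s.leadingCoeff * g + (-(C g.leadingCoeff * X ^ e)) * s := by
        rw [hg']; ring
      rw [this]
      exact O.Icoeff_add' (O.Icoeff_smul' _ hg) (O.Icoeff_smul' _ hs)
    have hcoeff : g'.coeff g.natDegree = 0 := by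
      have hE : e + s.natDegree = g.natDegree := by omega
      have hx : (X ^ e * s).coeff g.natDegree = s.leadingCoeff := by
        conv_lhs => rw [← hE, add_comm e s.natDegree]
        rw [Polynomial.coeff_X_pow_mul]
        rfl
      rw [hg', coeff_sub, coeff_C_mul, coeff_C_mul, hx]
      show s.leadingCoeff * g.leadingCoeff - g.leadingCoeff * s.leadingCoeff = 0
      ring
    have hdeg : g'.natDegree ≤ g.natDegree := by
      rw [hg']
      refine le_trans (Polynomial.natDegree_sub_le _ _) (max_le (natDegree_C_mul_le _ _) ?_)
      refine le_trans (Polynomial.natDegree_mul_le) ?_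
      rw [natDegree_C, zero_add]
      refine le_trans (Polynomial.natDegree_mul_le) ?_
      rw [natDegree_X_pow]
      omega
    by_cases hg'0 : g' = 0
    · refine ⟨s.leadingCoeff, C g.leadingCoeff * X ^ e, hslc, ?_⟩
      have := sub_eq_zero.mp (hg' ▸ hg'0)
      rw [this]; ring
    · have hlt : g'.natDegree < g.natDegree := by
        rcases Nat.lt_or_ge g'.natDegree g.natDegree with h | h
        · exact h
        · exfalso
          have : g'.natDegree = g.natDegree := le_antisymm hdeg h
          have := Polynomial.leadingCoeff_ne_zero.mpr hg'0
          rw [Polynomial.leadingCoeff, ‹g'.natDegree = g.natDegree›] at this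
          exact this hcoeff
      obtain ⟨r₁, q₁, hr₁, heq⟩ := IH g'.natDegree (lt_of_lt_of_le hlt hgn) g' hmem le_rfl
      refine ⟨r₁ * s.leadingCoeff, q₁ + C r₁ * (C g.leadingCoeff * X ^ e), mul_ne_zero hr₁ hslc, ?_⟩
      have heq2 : C r₁ * (C s.leadingCoeff * g - C g.leadingCoeff * (X ^ e * s)) = q₁ * s := by
        rw [← hg']; exact heq
      rw [C_mul]
      linear_combination heq2
lemma symm_C (a : R) : O.σ.symm (C a) = C a := by
  apply O.σ.injective
  rw [O.σ.apply_symm_apply, O.σ_fix]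

lemma symmIter_C (n : ℕ) (a : R) : (⇑O.σ.symm)^[n] (C a) = C a :=
  Function.iterate_fixed (O.symm_C a) n

lemma symmIter_mul (n : ℕ) (x y : Polynomial R) :
    (⇑O.σ.symm)^[n] (x * y) = (⇑O.σ.symm)^[n] x * (⇑O.σ.symm)^[n] y := by
  induction n with
  | zero => rfl
  | succ n IH => rw [Function.iterate_succ_apply', Function.iterate_succ_apply',
      Function.iterate_succ_apply', IH, map_mul]

lemma symmIter_inj (n : ℕ) : Function.Injective ((⇑O.σ.symm)^[n]) :=
  Function.Injective.iterate O.σ.symm.injective n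

lemma symmIter_iter (n : ℕ) (x : Polynomial R) :
    (⇑O.σ.symm)^[n] ((⇑O.σ)^[n] x) = x := by
  induction n with
  | zero => rfl
  | succ n IH =>
    rw [Function.iterate_succ_apply' (⇑O.σ), Function.iterate_succ_apply (⇑O.σ.symm),
      O.σ.symm_apply_apply, IH]
end OreAlg

theorem factor_extract {R : Type} [CommRing R] [IsDomain R] [IsPrincipalIdealRing R]
    {m : ℕ} (p : Fin m → Polynomial R)
    (hirr : ∀ i, Irreducible (p i) ∧ 0 < (p i).natDegree)
    (w : Polynomial R) :
    ∀ (n : Fin m → ℕ) (α : R), α ≠ 0 →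
      w ∣ C α * ∏ i, p i ^ n i →
      ∃ (δ : R) (f : Fin m → ℕ), (∀ i, f i ≤ n i) ∧ w = C δ * ∏ i, p i ^ f i := by
  classical
  refine UniqueFactorizationMonoid.induction_on_prime
    (P := fun w => ∀ (n : Fin m → ℕ) (α : R), α ≠ 0 →
      w ∣ C α * ∏ i, p i ^ n i →
      ∃ (δ : R) (f : Fin m → ℕ), (∀ i, f i ≤ n i) ∧ w = C δ * ∏ i, p i ^ f i)
    w ?_ ?_ ?_
  · intro n α hα hdvd
    exfalso
    have h0 : (C α * ∏ i, p i ^ n i : Polynomial R) ≠ 0 := by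
      apply mul_ne_zero
      · simpa using hα
      · exact Finset.prod_ne_zero_iff.mpr fun i _ => pow_ne_zero _ (hirr i).1.ne_zero
    exact h0 (zero_dvd_iff.mp hdvd)
  · intro u hu
    intro n α hα hdvd
    obtain ⟨r, _, hCr⟩ := Polynomial.isUnit_iff.mp hu
    exact ⟨r, 0, fun i => Nat.zero_le _, by simp [← hCr]⟩
  · intro a π ha hπ IH
    intro n α hα hdvd
    have hπdvd : π ∣ C α * ∏ i, p i ^ n i := dvd_trans (dvd_mul_right π a) hdvd
    by_cases hc : π ∣ C α
    · -- constant prime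
      have hCα : (C α : Polynomial R) ≠ 0 := by simpa using hα
      have hdeg : π.natDegree = 0 :=
        Nat.le_antisymm (by simpa using Polynomial.natDegree_le_of_dvd hc hCα) (Nat.zero_le _)
      obtain ⟨z, hz⟩ := hc
      have hz0 : z ≠ 0 := fun h => hCα (by simp [hz, h])
      have hzdeg : z.natDegree = 0 := by
        have := congrArg natDegree hz
        rw [Polynomial.natDegree_mul hπ.ne_zero hz0, natDegree_C, hdeg] at this
        omega
      have hπe : π = C (π.coeff 0) := (Polynomial.eq_C_of_natDegree_eq_zero hdeg)
      have hze : z = C (z.coeff 0) := (Polynomial.eq_C_of_natDegree_eq_zero hzdeg)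
      have hαeq : α = π.coeff 0 * z.coeff 0 := by
        have : C α = C (π.coeff 0 * z.coeff 0) := by
          rw [C_mul, ← hπe, ← hze]; exact hz
        exact C_injective this
      have hz00 : z.coeff 0 ≠ 0 := fun h => hα (by rw [hαeq, h, mul_zero])
      have hπ00 : π.coeff 0 ≠ 0 := fun h => hπ.ne_zero (by rw [hπe, h, map_zero])
      obtain ⟨y, hy⟩ := hdvd
      have hadvd : a ∣ C (z.coeff 0) * ∏ i, p i ^ n i := by
        refine ⟨y, ?_⟩
        apply mul_left_cancel₀ (show (C (π.coeff 0) : Polynomial R) ≠ 0 by simpa using hπ00)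
        calc C (π.coeff 0) * (C (z.coeff 0) * ∏ i, p i ^ n i)
            = C α * ∏ i, p i ^ n i := by rw [← mul_assoc, ← C_mul, ← hαeq]
          _ = π * a * y := hy
          _ = C (π.coeff 0) * (a * y) := by rw [← hπe]; ring
      obtain ⟨δ, f, hf, hfa⟩ := IH n (z.coeff 0) hz00 hadvd
      exact ⟨π.coeff 0 * δ, f, hf, by rw [C_mul, hfa, ← hπe]; ring⟩
    · -- π divides the product of the p i
      have hπprod : π ∣ ∏ i, p i ^ n i := (hπ.dvd_mul.mp hπdvd).resolve_left hc
      obtain ⟨i, _, hi⟩ := hπ.exists_mem_finset_dvd hπprod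
      have hni : n i ≠ 0 := by
        intro h0; rw [h0, pow_zero] at hi
        exact hπ.not_unit (isUnit_of_dvd_one hi)
      have hπpi : π ∣ p i := hπ.dvd_of_dvd_pow hi
      obtain ⟨u, hu⟩ := (hπ.irreducible).associated_of_dvd (hirr i).1 hπpi
      set n' : Fin m → ℕ := Function.update n i (n i - 1) with hn'
      have hsplit : (∏ j, p j ^ n j) = p i * ∏ j, p j ^ n' j := by
        rw [← Finset.mul_prod_erase Finset.univ (fun j => p j ^ n j) (Finset.mem_univ i),
            ← Finset.mul_prod_erase Finset.univ (fun j => p j ^ n' j) (Finset.mem_univ i)]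
        have h1 : p i ^ n i = p i * p i ^ n' i := by
          rw [hn', Function.update_self]
          conv_lhs => rw [show n i = 1 + (n i - 1) by omega]
          rw [pow_add, pow_one]
        have h2 : ∏ j ∈ Finset.univ.erase i, p j ^ n j = ∏ j ∈ Finset.univ.erase i, p j ^ n' j :=
          Finset.prod_congr rfl fun j hj => by
            rw [hn', Function.update_of_ne (Finset.ne_of_mem_erase hj)]
        rw [h1, h2]; ring
      obtain ⟨y, hy⟩ := hdvd
      have hadvd : a ∣ C α * ∏ j, p j ^ n' j := by
        rw [← Units.dvd_mul_left (u := u)]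
        refine ⟨y, ?_⟩
        apply mul_left_cancel₀ hπ.ne_zero
        calc π * (↑u * (C α * ∏ j, p j ^ n' j))
            = C α * ((π * ↑u) * ∏ j, p j ^ n' j) := by ring
          _ = C α * ∏ j, p j ^ n j := by rw [hu, hsplit]
          _ = π * a * y := hy
          _ = π * (a * y) := by ring
      obtain ⟨δ, f, hf, hfa⟩ := IH n' α hα hadvd
      obtain ⟨v, hvu, hv⟩ := Polynomial.isUnit_iff.mp (u⁻¹ : (Polynomial R)ˣ).isUnit
      have hπeq : π = p i * C v := by
        rw [hv, ← hu, mul_assoc, Units.mul_inv, mul_one]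
      refine ⟨v * δ, Function.update f i (f i + 1), ?_, ?_⟩
      · intro j
        by_cases hji : j = i
        · subst hji
          have := hf j
          rw [hn', Function.update_self] at this
          rw [Function.update_self]; omega
        · rw [Function.update_of_ne hji]
          have := hf j
          rwa [hn', Function.update_of_ne hji] at this
      · have hsplit2 : (∏ j, p j ^ Function.update f i (f i + 1) j) = p i * ∏ j, p j ^ f j := by
          rw [← Finset.mul_prod_erase Finset.univ (fun j => p j ^ Function.update f i (f i + 1) j) (Finset.mem_univ i),
              ← Finset.mul_prod_erase Finset.univ (fun j => p j ^ f j) (Finset.mem_univ i)]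
          have h1 : p i ^ Function.update f i (f i + 1) i = p i * p i ^ f i := by
            rw [Function.update_self, pow_succ]; ring
          have h2 : ∏ j ∈ Finset.univ.erase i, p j ^ Function.update f i (f i + 1) j
              = ∏ j ∈ Finset.univ.erase i, p j ^ f j :=
            Finset.prod_congr rfl fun j hj => by
              rw [Function.update_of_ne (Finset.ne_of_mem_erase hj)]
          rw [h1, h2]; ring
        rw [hsplit2, hπeq, hfa, C_mul]; ring

/-- if `M_k` contains a desingularized operator for `L` and `s` is
a nonzero element of minimal `x`-degree in `I_k`, then any `S ∈ M_k` of order `k`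
with `lc_∂(S) = s` is a desingularized operator for `L`. -/
theorem min_coeff_gives_desing {R : Type} [CommRing R] [IsDomain R]
    [IsPrincipalIdealRing R] {A : Type} [Ring A] (O : OreAlg R A)
    (L : A) (hL : L ≠ 0) (hLB : O.InB L)
    (r m : ℕ) (c : R) (p : Fin m → Polynomial R) (e : Fin m → ℕ)
    (hF : O.Factored L r m c p e)
    (k : ℕ) (T : A) (hT : O.Desing L r m c p e T) (hTk : T ∈ O.M L k)
    (s : Polynomial R) (hs : s ∈ O.Icoeff L k) (hs0 : s ≠ 0)
    (hmin : ∀ f ∈ O.Icoeff L k, f ≠ 0 → s.natDegree ≤ f.natDegree)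
    (S : A) (hS : S ∈ O.M L k) (hSord : O.ord S = k)
    (hSlc : O.lc S = algebraMap (Polynomial R) (QX R) s) :
    O.Desing L r m c p e S := by
  classical
  obtain ⟨hTc, hTr, a, b, kv, t, l₁, hb, hkve, hTlc, hLlc, hTeq, hTrem⟩ := hT
  obtain ⟨hordL, hrpos, hc0, hLlc2, hirr, hcop⟩ := hF
  have hinj : Function.Injective (algebraMap (Polynomial R) (QX R)) := O.algP_inj
  have hl₁ : l₁ = C c * ∏ i, p i ^ e i := hinj (hLlc.symm.trans hLlc2)
  have hTok : O.ord T ≤ k := hTk.2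
  have hrk : r ≤ k := le_trans hTr hTok
  have hT0 : T ≠ 0 := by
    intro h
    rw [h, O.ord_zero] at hTr
    omega
  have ht0 : t ≠ 0 := by
    intro h
    have hne := O.coeff_ord_ne hT0
    rw [show O.coeff T (O.ord T) = O.lc T from rfl, hTlc, h, map_zero] at hne
    exact hne rfl
  obtain ⟨hPc, hP0, hPord, hPlc⟩ := O.boost L T (k - O.ord T) hTc hT0 t hTlc
  have hPk : O.ord (O.D ^ (k - O.ord T) * T) = k := by rw [hPord]; omega
  set u : Polynomial R := (⇑O.σ)^[k - O.ord T] t with hu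
  have huI : u ∈ O.Icoeff L k := by
    refine ⟨O.D ^ (k - O.ord T) * T, ⟨hPc, le_of_eq hPk⟩, ?_⟩
    have h2 : O.coeff (O.D ^ (k - O.ord T) * T) (O.ord (O.D ^ (k - O.ord T) * T))
        = algebraMap (Polynomial R) (QX R) u := hPlc
    rwa [hPk] at h2
  obtain ⟨r₀, q, hr₀, hdiv⟩ := O.min_div L k s hs hs0 hmin u.natDegree u huI le_rfl
  have key := congrArg ((⇑O.σ.symm)^[k - r]) hdiv
  rw [O.symmIter_mul, O.symmIter_mul, O.symmIter_C] at key
  have hiter_u : (⇑O.σ.symm)^[k - r] u = (⇑O.σ.symm)^[O.ord T - r] t := by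
    rw [hu, show k - r = (O.ord T - r) + (k - O.ord T) by omega,
      Function.iterate_add_apply, O.symmIter_iter]
  rw [hiter_u] at key
  set s' := (⇑O.σ.symm)^[k - r] s with hs'
  set q' := (⇑O.σ.symm)^[k - r] q with hq'
  set t' := (⇑O.σ.symm)^[O.ord T - r] t with ht'
  have ht'0 : t' ≠ 0 := by
    intro h
    apply ht0
    apply O.symmIter_inj (O.ord T - r)
    rw [← ht', h, Function.iterate_fixed (map_zero O.σ.symm)]
  have hpne : ∀ i, p i ≠ 0 := fun i => (hirr i).1.ne_zero
  have hprod_ne : (∏ i, p i ^ kv i) ≠ 0 :=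
    Finset.prod_ne_zero_iff.mpr fun i _ => pow_ne_zero _ (hpne i)
  have ha0 : a ≠ 0 := by
    intro h
    rw [h, map_zero, zero_mul] at hTeq
    exact mul_ne_zero ht'0 (mul_ne_zero (C_ne_zero.mpr hb) hprod_ne) hTeq
  have hprodsplit : (∏ i, p i ^ e i) = (∏ i, p i ^ (e i - kv i)) * ∏ i, p i ^ kv i := by
    rw [← Finset.prod_mul_distrib]
    refine Finset.prod_congr rfl fun i _ => ?_
    rw [← pow_add]
    congr 1
    have := hkve i
    omega
  have hbig : q' * s' * C b = C (r₀ * a * c) * ∏ i, p i ^ (e i - kv i) := by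
    apply mul_right_cancel₀ hprod_ne
    calc q' * s' * C b * ∏ i, p i ^ kv i
        = (C r₀ * t') * (C b * ∏ i, p i ^ kv i) := by rw [← key]; ring
      _ = C r₀ * (t' * (C b * ∏ i, p i ^ kv i)) := by ring
      _ = C r₀ * (C a * l₁) := by rw [hTeq]
      _ = C (r₀ * a * c) * (∏ i, p i ^ (e i - kv i)) * ∏ i, p i ^ kv i := by
          rw [hl₁, hprodsplit, C_mul, C_mul]; ring
  obtain ⟨δ₀, f, hf, hsfact⟩ := factor_extract p hirr s' (fun i => e i - kv i) (r₀ * a * c)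
    (mul_ne_zero (mul_ne_zero hr₀ ha0) hc0) ⟨q' * C b, by rw [← hbig]; ring⟩
  refine ⟨hS.1, by rw [hSord]; exact hrk, δ₀, c, (fun i => e i - f i), s,
    C c * ∏ i, p i ^ e i, hc0, fun i => Nat.sub_le _ _, hSlc, hLlc2, ?_, ?_⟩
  · rw [hSord, ← hs', hsfact]
    have hsp : (∏ i, p i ^ e i) = (∏ i, p i ^ f i) * ∏ i, p i ^ (e i - f i) := by
      rw [← Finset.prod_mul_distrib]
      refine Finset.prod_congr rfl fun i _ => ?_
      rw [← pow_add]
      congr 1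
      have h1 := hf i
      have h2 := hkve i
      omega
    rw [hsp]; ring
  · intro i d hd
    apply hTrem i d
    have hd' : e i - f i < d := hd
    have h1 := hf i
    have h2 := hkve i
    omega
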